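/- Let n ≥ 2 and let A : {0,1}^n → ℝ be a real binary tensor. For each m with 2 ≤ m ≤ n, the m-th piece of d₂+⋯+d_n−d₁ is non-negative: Σ_{k=2}^n Σ_{{r,s} : w(r,s)=m} μ_{k,r,s}(A)² ≥ Σ_{{r,s} : w(r,s)=m} μ_{1,r,s}(A)², where both inner sums run over unordered pairs {r,s} of distinct elements of {0,1}^{n−1} whose number of differing coordinates equals m−1. -/

import Mathlib

open scoped Classical

/-- The multi-index in `{0,1}^n` with `k`-th coordinate `b` and remaining coordinates `r`. -/
def iotaIdx (n : ℕ) (k : Fin n) (b : Bool) (r : {j : Fin n // j ≠ k} → Bool) : Fin n → Bool :=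
  fun j => if h : j = k then b else r ⟨j, h⟩

/-- The squared `2×2` minor of the `k`-th flattening of `A` corresponding to an unordered
pair of columns `{r, s}`; it is well defined on unordered pairs since the minor changes
only by a sign under swapping `r` and `s`. -/
noncomputable def minorSq (n : ℕ) (A : (Fin n → Bool) → ℝ) (k : Fin n) :
    Sym2 ({j : Fin n // j ≠ k} → Bool) → ℝ :=
  Sym2.lift ⟨fun r s =>
    (A (iotaIdx n k false r) * A (iotaIdx n k true s) -
      A (iotaIdx n k true r) * A (iotaIdx n k false s)) ^ 2,
    fun r s => by ring⟩

/-- The weight `w(r,s) = 1 + #{positions where r and s differ}` of an unordered pair of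
columns. -/
noncomputable def pairWeight (n : ℕ) (k : Fin n) :
    Sym2 ({j : Fin n // j ≠ k} → Bool) → ℕ :=
  Sym2.lift ⟨fun r s => 1 + (Finset.univ.filter (fun j => r j ≠ s j)).card,
    fun r s => by simp [ne_comm]⟩

namespace SOSAux

open Finset

variable {n : ℕ}

noncomputable def flipS (S : Finset (Fin n)) (x : Fin n → Bool) : Fin n → Bool :=
  fun j => if j ∈ S then !(x j) else x j

lemma flipS_empty (x : Fin n → Bool) : flipS ∅ x = x := by
  funext j; simp [flipS]

lemma flipS_flipS (S : Finset (Fin n)) (x : Fin n → Bool) : flipS S (flipS S x) = x := by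
  funext j; simp only [flipS]; split <;> simp

lemma flipS_comm (S T : Finset (Fin n)) (x : Fin n → Bool) :
    flipS S (flipS T x) = flipS T (flipS S x) := by
  funext j; simp only [flipS]; split <;> split <;> simp

lemma flipS_erase {D : Finset (Fin n)} {k : Fin n} (h : k ∈ D) (x : Fin n → Bool) :
    flipS D (flipS {k} x) = flipS (D.erase k) x := by
  funext j; simp only [flipS, mem_erase, mem_singleton]
  by_cases hj : j = k
  · subst hj; simp [h]
  · simp [hj]

lemma flipS_insert {a : Fin n} {S : Finset (Fin n)} (ha : a ∉ S) (x : Fin n → Bool) :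
    flipS (insert a S) x = flipS S (flipS {a} x) := by
  funext j; simp only [flipS, mem_insert, mem_singleton]
  by_cases hj : j = a
  · subst hj; simp [ha]
  · simp [hj]

lemma sum_flip (S : Finset (Fin n)) (g : (Fin n → Bool) → ℝ) :
    ∑ x : Fin n → Bool, g (flipS S x) = ∑ x : Fin n → Bool, g x :=
  Fintype.sum_bijective (flipS S) (Function.Involutive.bijective (flipS_flipS S)) _ _
    (fun _ => rfl)

/-- The key Poincaré-type inequality on the cube. -/
lemma star (S : Finset (Fin n)) (H : (Fin n → Bool) → ℝ) :
    ∑ x : Fin n → Bool, (H x - H (flipS S x)) ^ 2 ≤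
      ∑ k ∈ S, ∑ x : Fin n → Bool, (H x - H (flipS {k} x)) ^ 2 := by
  induction S using Finset.induction_on with
  | empty =>
      simp [flipS_empty]
  | @insert a S ha IH =>
      set v : (Fin n → Bool) → ℝ := fun x => (H x - H (flipS S x)) / 2 with hv
      set w : (Fin n → Bool) → ℝ := fun x => (H x + H (flipS S x)) / 2 with hw
      have hH : ∀ x, H x = v x + w x := fun x => by
        show H x = (H x - H (flipS S x)) / 2 + (H x + H (flipS S x)) / 2; ring
      have hHσ : ∀ x, H (flipS S x) = w x - v x := fun x => by
        show H (flipS S x) = (H x + H (flipS S x)) / 2 - (H x - H (flipS S x)) / 2; ring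
      have hvσ : ∀ x, v (flipS S x) = - v x := fun x => by
        show (H (flipS S x) - H (flipS S (flipS S x))) / 2 = -((H x - H (flipS S x)) / 2)
        rw [flipS_flipS]; ring
      have hwσ : ∀ x, w (flipS S x) = w x := fun x => by
        show (H (flipS S x) + H (flipS S (flipS S x))) / 2 = (H x + H (flipS S x)) / 2
        rw [flipS_flipS]; ring
      have hvw : ∑ x : Fin n → Bool, v x * w x = 0 := by
        have h1 := sum_flip S (fun x => v x * w x)
        simp only [hvσ, hwσ] at h1
        have h2 : ∑ x : Fin n → Bool, -v x * w x = -∑ x : Fin n → Bool, v x * w x := by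
          rw [← Finset.sum_neg_distrib]; exact Finset.sum_congr rfl fun x _ => by ring
        rw [h2] at h1; linarith
      have hc : ∑ x : Fin n → Bool, w x * v (flipS {a} x) = 0 := by
        have h1 := sum_flip S (fun x => w x * v (flipS {a} x))
        have h1' : ∀ x, w (flipS S x) * v (flipS {a} (flipS S x))
            = -(w x * v (flipS {a} x)) := by
          intro x; rw [hwσ, ← flipS_comm, hvσ]; ring
        simp only [h1'] at h1
        rw [Finset.sum_neg_distrib] at h1; linarith
      have hc' : ∑ x : Fin n → Bool, w (flipS {a} x) * v (flipS {a} x) = 0 := by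
        have h1 := sum_flip {a} (fun x => w x * v x)
        rw [h1]
        rw [show ∑ x : Fin n → Bool, w x * v x = ∑ x : Fin n → Bool, v x * w x from
          Finset.sum_congr rfl fun x _ => by ring]
        exact hvw
      have hd : ∑ x : Fin n → Bool, v x * v (flipS {a} x) ≤ ∑ x : Fin n → Bool, v x ^ 2 := by
        have h0 : (0:ℝ) ≤ ∑ x : Fin n → Bool, (v x - v (flipS {a} x)) ^ 2 :=
          Finset.sum_nonneg fun _ _ => sq_nonneg _
        have hsq : ∑ x : Fin n → Bool, v (flipS {a} x) ^ 2 = ∑ x : Fin n → Bool, v x ^ 2 :=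
          sum_flip {a} (fun x => v x ^ 2)
        have hexp : ∑ x : Fin n → Bool, (v x - v (flipS {a} x)) ^ 2
            = ∑ x : Fin n → Bool, v x ^ 2 + ∑ x : Fin n → Bool, v (flipS {a} x) ^ 2
              - 2 * ∑ x : Fin n → Bool, v x * v (flipS {a} x) := by
          rw [Finset.mul_sum, ← Finset.sum_add_distrib, ← Finset.sum_sub_distrib]
          exact Finset.sum_congr rfl fun x _ => by ring
        rw [hexp, hsq] at h0
        linarith
      have hIH4 : 4 * ∑ x : Fin n → Bool, v x ^ 2
          = ∑ x : Fin n → Bool, (H x - H (flipS S x)) ^ 2 := by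
        rw [Finset.mul_sum]
        exact Finset.sum_congr rfl fun x _ => by
          show 4 * ((H x - H (flipS S x)) / 2) ^ 2 = _; ring
      have hpt : ∀ x, (H x - H (flipS (insert a S) x)) ^ 2
          = (H x - H (flipS {a} x)) ^ 2 + 4 * (v x * v (flipS {a} x))
            + 4 * (w x * v (flipS {a} x)) - 4 * (w (flipS {a} x) * v (flipS {a} x)) := by
        intro x
        rw [flipS_insert ha, hHσ (flipS {a} x), hH x, hH (flipS {a} x)]
        ring
      have hmain : ∑ x : Fin n → Bool, (H x - H (flipS (insert a S) x)) ^ 2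
          = ∑ x : Fin n → Bool, (H x - H (flipS {a} x)) ^ 2
            + 4 * ∑ x : Fin n → Bool, v x * v (flipS {a} x)
            + 4 * ∑ x : Fin n → Bool, w x * v (flipS {a} x)
            - 4 * ∑ x : Fin n → Bool, w (flipS {a} x) * v (flipS {a} x) := by
        rw [Finset.mul_sum, Finset.mul_sum, Finset.mul_sum, ← Finset.sum_add_distrib,
          ← Finset.sum_add_distrib, ← Finset.sum_sub_distrib]
        exact Finset.sum_congr rfl fun x _ => hpt x
      rw [Finset.sum_insert ha, hmain, hc, hc']
      linarith

lemma two_mul_sym2 {α : Type*} [Fintype α] [DecidableEq α] (f : Sym2 α → ℝ) (wt : Sym2 α → ℕ) (m : ℕ) :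
    2 * ∑ p ∈ Finset.univ.filter (fun p : Sym2 α => ¬ p.IsDiag ∧ wt p = m), f p
      = ∑ z ∈ (Finset.univ ×ˢ Finset.univ : Finset (α × α)).filter
          (fun z => z.1 ≠ z.2 ∧ wt (Sym2.mk z.1 z.2) = m), f (Sym2.mk z.1 z.2) := by
  set t := Finset.univ.filter (fun p : Sym2 α => ¬ p.IsDiag ∧ wt p = m) with ht
  set s := (Finset.univ ×ˢ Finset.univ : Finset (α × α)).filter
      (fun z => z.1 ≠ z.2 ∧ wt (Sym2.mk z.1 z.2) = m) with hs
  have hmaps : ∀ z ∈ s, Sym2.mk z.1 z.2 ∈ t := by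
    intro z hz
    simp only [hs, Finset.mem_filter] at hz
    simp only [ht, Finset.mem_filter, Finset.mem_univ, true_and]
    exact ⟨by rw [Sym2.isDiag_iff_proj_eq]; exact hz.2.1, hz.2.2⟩
  rw [← Finset.sum_fiberwise_of_maps_to hmaps (fun z => f (Sym2.mk z.1 z.2)), Finset.mul_sum]
  apply Finset.sum_congr rfl
  intro p hp
  have hinner : ∑ z ∈ s.filter (fun z => Sym2.mk z.1 z.2 = p), f (Sym2.mk z.1 z.2)
      = ∑ z ∈ s.filter (fun z => Sym2.mk z.1 z.2 = p), f p := by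
    apply Finset.sum_congr rfl
    intro z hz
    rw [(Finset.mem_filter.1 hz).2]
  rw [hinner, Finset.sum_const, nsmul_eq_mul]
  have hcard : (s.filter (fun z => Sym2.mk z.1 z.2 = p)).card = 2 := by
    induction p using Sym2.ind with
    | _ a b =>
      simp only [ht, Finset.mem_filter, Finset.mem_univ, true_and, Sym2.mk_isDiag_iff] at hp
      have hab : a ≠ b := hp.1
      have : s.filter (fun z => Sym2.mk z.1 z.2 = s(a, b)) = {(a, b), (b, a)} := by
        ext z
        simp only [Finset.mem_filter, hs, Finset.mem_product, Finset.mem_univ, true_and,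
          Finset.mem_insert, Finset.mem_singleton]
        constructor
        · rintro ⟨_, hmk⟩
          rcases (Sym2.mk_eq_mk_iff (p := z) (q := (a, b))).1 hmk with h | h
          · left; exact h ▸ rfl
          · right
            exact h
        · rintro (rfl | rfl)
          · exact ⟨⟨hab, hp.2⟩, rfl⟩
          · exact ⟨⟨fun h => hab h.symm, by rw [Sym2.eq_swap]; exact hp.2⟩, Sym2.eq_swap⟩
      rw [this]
      rw [Finset.card_insert_of_notMem (by simp [Prod.ext_iff, hab]),
        Finset.card_singleton]
  rw [hcard]
  norm_num

section Fixed

variable (k : Fin n) (A : (Fin n → Bool) → ℝ)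

local notation "R" => ({j : Fin n // j ≠ k} → Bool)

lemma iota_apply_eq (b : Bool) (r : R) : iotaIdx n k b r k = b := dif_pos rfl

lemma iota_apply_ne (b : Bool) (r : R) {j : Fin n} (hj : j ≠ k) :
    iotaIdx n k b r j = r ⟨j, hj⟩ := dif_neg hj

/-- The set of coordinates where the pair differs, together with `k`. -/
noncomputable def Dof (r s : R) : Finset (Fin n) :=
  insert k ((Finset.univ.filter fun j : {j : Fin n // j ≠ k} => r j ≠ s j).image Subtype.val)

lemma k_mem_Dof (r s : R) : k ∈ Dof k r s := mem_insert_self _ _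

lemma mem_Dof_of_ne {r s : R} {j : Fin n} (hj : j ≠ k) :
    j ∈ Dof k r s ↔ r ⟨j, hj⟩ ≠ s ⟨j, hj⟩ := by
  simp only [Dof, mem_insert, hj, false_or, mem_image, mem_filter, mem_univ, true_and]
  constructor
  · rintro ⟨j', hj', rfl⟩
    exact hj'
  · intro h
    exact ⟨⟨j, hj⟩, h, rfl⟩

lemma card_Dof (r s : R) :
    (Dof k r s).card
      = 1 + (Finset.univ.filter fun j : {j : Fin n // j ≠ k} => r j ≠ s j).card := by
  rw [Dof, card_insert_of_notMem, card_image_of_injective _ Subtype.val_injective, add_comm]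
  intro hk
  obtain ⟨j', _, hval⟩ := mem_image.1 hk
  exact j'.prop hval

lemma flipD_iota (r s : R) :
    flipS (Dof k r s) (iotaIdx n k false r) = iotaIdx n k true s := by
  funext j
  by_cases hj : j = k
  · subst hj
    simp [flipS, k_mem_Dof, iota_apply_eq]
  · simp only [flipS, iota_apply_ne k _ _ hj, mem_Dof_of_ne k hj]
    by_cases hrs : r ⟨j, hj⟩ = s ⟨j, hj⟩
    · simp [hrs]
    · simp only [hrs, ne_eq, not_false_eq_true, if_true]
      cases h1 : r ⟨j, hj⟩ <;> cases h2 : s ⟨j, hj⟩ <;> simp_all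

lemma flip_single_iota (b : Bool) (r : R) :
    flipS {k} (iotaIdx n k b r) = iotaIdx n k (!b) r := by
  funext j
  by_cases hj : j = k
  · subst hj; simp [flipS, iota_apply_eq]
  · simp [flipS, hj, iota_apply_ne k _ _ hj]

lemma flipDerase_iota (r s : R) :
    flipS ((Dof k r s).erase k) (iotaIdx n k false r) = iotaIdx n k false s := by
  funext j
  by_cases hj : j = k
  · subst hj
    simp [flipS, iota_apply_eq]
  · simp only [flipS, mem_erase, hj, ne_eq, not_false_eq_true, true_and,
      mem_Dof_of_ne k hj, iota_apply_ne k _ _ hj]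
    by_cases hrs : r ⟨j, hj⟩ = s ⟨j, hj⟩
    · simp [hrs]
    · simp only [hrs, ne_eq, not_false_eq_true, if_true]
      cases h1 : r ⟨j, hj⟩ <;> cases h2 : s ⟨j, hj⟩ <;> simp_all

lemma x_ne_flipS_iff (D : Finset (Fin n)) (x : Fin n → Bool) (j : Fin n) :
    x j ≠ flipS D x j ↔ j ∈ D := by
  simp only [flipS]
  by_cases hj : j ∈ D
  · simp only [hj, if_true, iff_true]
    cases x j <;> simp
  · simp [hj]

/-- key counting step: the ordered pair sum equals the `(D, x)` sum. -/
lemma ordered_eq (m : ℕ) (hm : 2 ≤ m) :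
    ∑ z ∈ (Finset.univ ×ˢ Finset.univ : Finset (R × R)).filter
        (fun z => z.1 ≠ z.2 ∧ pairWeight n k (Sym2.mk z.1 z.2) = m), minorSq n A k (Sym2.mk z.1 z.2)
      = ∑ Dx ∈ (Finset.univ.powersetCard m ×ˢ Finset.univ :
            Finset (Finset (Fin n) × ((Fin n → Bool)))).filter
          (fun Dx => k ∈ Dx.1 ∧ Dx.2 k = false),
        (A Dx.2 * A (flipS Dx.1 Dx.2)
          - A (flipS {k} Dx.2) * A (flipS Dx.1 (flipS {k} Dx.2))) ^ 2 := by
  apply Finset.sum_nbij' (i := fun z : R × R => (Dof k z.1 z.2, iotaIdx n k false z.1))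
    (j := fun Dx : Finset (Fin n) × (Fin n → Bool) =>
      ((fun j => Dx.2 j.1), (fun j => flipS Dx.1 Dx.2 j.1)))
  · -- hi : maps into target
    rintro ⟨r, s⟩ hz
    rw [mem_filter] at hz
    simp only [mem_filter, mem_product, mem_univ, true_and, pairWeight, Sym2.lift_mk] at hz
    simp only [mem_filter, mem_product, mem_powersetCard, mem_univ, true_and]
    refine ⟨⟨⟨subset_univ _, ?_⟩, trivial⟩, k_mem_Dof k r s, iota_apply_eq k false r⟩
    rw [card_Dof, hz.2]
  · -- hj : maps back
    rintro ⟨D, x⟩ hDx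
    simp only [mem_filter, mem_product, mem_powersetCard, mem_univ, true_and] at hDx
    obtain ⟨⟨⟨-, hcard⟩, -⟩, hkD, hxk⟩ := hDx
    rw [mem_filter]
    simp only [mem_filter, mem_product, mem_univ, true_and, pairWeight, Sym2.lift_mk]
    have hfilter : (Finset.univ.filter
        fun j : {j : Fin n // j ≠ k} => x j.1 ≠ flipS D x j.1)
        = Finset.univ.filter (fun j : {j : Fin n // j ≠ k} => j.1 ∈ D) := by
      apply Finset.filter_congr
      intro j _
      simp [x_ne_flipS_iff]
    have himg : (Finset.univ.filter (fun j : {j : Fin n // j ≠ k} => j.1 ∈ D)).image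
        Subtype.val = D.erase k := by
      ext j
      simp only [mem_image, mem_filter, mem_univ, true_and, mem_erase]
      constructor
      · rintro ⟨j', hj', rfl⟩
        exact ⟨j'.prop, hj'⟩
      · rintro ⟨hjk, hjD⟩
        exact ⟨⟨j, hjk⟩, hjD, rfl⟩
    have hcard2 : (Finset.univ.filter
        (fun j : {j : Fin n // j ≠ k} => x j.1 ≠ flipS D x j.1)).card = m - 1 := by
      rw [hfilter, ← card_image_of_injective _ Subtype.val_injective, himg,
        card_erase_of_mem hkD, hcard]
    constructor
    · -- r ≠ s
      have hne : (D.erase k).Nonempty := by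
        rw [← card_pos, card_erase_of_mem hkD, hcard]
        omega
      obtain ⟨j, hj⟩ := hne
      rw [mem_erase] at hj
      intro heq
      have := congrFun heq ⟨j, hj.1⟩
      simp only at this
      exact (x_ne_flipS_iff D x j).2 hj.2 this
    · rw [hcard2]; omega
  · -- left inverse
    rintro ⟨r, s⟩ hz
    have h1 : (fun j : {j : Fin n // j ≠ k} => iotaIdx n k false r j.1) = r := by
      funext j
      rw [iota_apply_ne k false r j.prop]
    have h2 : (fun j : {j : Fin n // j ≠ k} =>
        flipS (Dof k r s) (iotaIdx n k false r) j.1) = s := by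
      funext j
      rw [flipD_iota, iota_apply_ne k true s j.prop]
    exact Prod.ext h1 h2
  · -- right inverse
    rintro ⟨D, x⟩ hDx
    simp only [mem_filter, mem_product, mem_powersetCard, mem_univ, true_and] at hDx
    obtain ⟨⟨⟨-, hcard⟩, -⟩, hkD, hxk⟩ := hDx
    have hD : Dof k (fun j => x j.1) (fun j => flipS D x j.1) = D := by
      ext j
      by_cases hj : j = k
      · subst hj; simp [k_mem_Dof, hkD]
      · rw [mem_Dof_of_ne k hj]
        exact x_ne_flipS_iff D x j
    have hx : iotaIdx n k false (fun j => x j.1) = x := by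
      funext j
      by_cases hj : j = k
      · subst hj; rw [iota_apply_eq, hxk]
      · rw [iota_apply_ne k _ _ hj]
    exact Prod.ext hD hx
  · -- values agree
    rintro ⟨r, s⟩ hz
    simp only [minorSq, Sym2.lift_mk]
    have e1 : flipS (Dof k r s) (iotaIdx n k false r) = iotaIdx n k true s :=
      flipD_iota k r s
    have e2 : flipS {k} (iotaIdx n k false r) = iotaIdx n k true r := by
      rw [flip_single_iota]; rfl
    have e3 : flipS (Dof k r s) (flipS {k} (iotaIdx n k false r))
        = iotaIdx n k false s := by
      rw [flipS_erase (k_mem_Dof k r s), flipDerase_iota]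
    rw [e1, e3, e2]

end Fixed

lemma flipS_erase2 {D : Finset (Fin n)} {k : Fin n} (h : k ∈ D) (x : Fin n → Bool) :
    flipS D (flipS (D.erase k) x) = flipS {k} x := by
  funext j; simp only [flipS, mem_erase, mem_singleton]
  by_cases hj : j = k
  · subst hj; simp [h]
  · by_cases hjD : j ∈ D <;> simp [hj, hjD]

lemma flipS_single_apply (k : Fin n) (x : Fin n → Bool) : flipS {k} x k = !(x k) := by
  simp [flipS]

section Fixed2

variable (k : Fin n) (A : (Fin n → Bool) → ℝ) (m : ℕ)

/-- The `(D, x)`-indexed sum defining (four times) the `m`-th piece for flattening `k`. -/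
noncomputable def UU : ℝ :=
  ∑ Dx ∈ (Finset.univ.powersetCard m ×ˢ Finset.univ :
        Finset (Finset (Fin n) × ((Fin n → Bool)))).filter
      (fun Dx => k ∈ Dx.1),
    (A Dx.2 * A (flipS Dx.1 Dx.2)
      - A (flipS {k} Dx.2) * A (flipS Dx.1 (flipS {k} Dx.2))) ^ 2

/-- Halving: restricting to `x k = false` gives exactly half. -/
lemma sum_E_eq :
    UU k A m = 2 * ∑ Dx ∈ (Finset.univ.powersetCard m ×ˢ Finset.univ :
          Finset (Finset (Fin n) × ((Fin n → Bool)))).filter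
        (fun Dx => k ∈ Dx.1 ∧ Dx.2 k = false),
      (A Dx.2 * A (flipS Dx.1 Dx.2)
        - A (flipS {k} Dx.2) * A (flipS Dx.1 (flipS {k} Dx.2))) ^ 2 := by
  classical
  set g : Finset (Fin n) × (Fin n → Bool) → ℝ := fun Dx =>
    (A Dx.2 * A (flipS Dx.1 Dx.2)
      - A (flipS {k} Dx.2) * A (flipS Dx.1 (flipS {k} Dx.2))) ^ 2 with hg
  set s := (Finset.univ.powersetCard m ×ˢ Finset.univ :
      Finset (Finset (Fin n) × ((Fin n → Bool)))).filter (fun Dx => k ∈ Dx.1) with hs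
  have hsplit : ∑ Dx ∈ s.filter (fun Dx => Dx.2 k = false), g Dx
      + ∑ Dx ∈ s.filter (fun Dx => ¬ (Dx.2 k = false)), g Dx = ∑ Dx ∈ s, g Dx :=
    Finset.sum_filter_add_sum_filter_not s _ g
  have hswap : ∑ Dx ∈ s.filter (fun Dx => ¬ (Dx.2 k = false)), g Dx
      = ∑ Dx ∈ s.filter (fun Dx => Dx.2 k = false), g Dx := by
    apply Finset.sum_nbij' (i := fun Dx : Finset (Fin n) × (Fin n → Bool) =>
        (Dx.1, flipS {k} Dx.2))
      (j := fun Dx : Finset (Fin n) × (Fin n → Bool) => (Dx.1, flipS {k} Dx.2))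
    · rintro ⟨D, x⟩ hDx
      simp only [hs, Finset.mem_filter, Finset.mem_product, Finset.mem_univ, and_true,
        true_and] at hDx ⊢
      refine ⟨⟨hDx.1.1, hDx.1.2⟩, ?_⟩
      rw [flipS_single_apply]
      revert hDx
      cases x k <;> simp
    · rintro ⟨D, x⟩ hDx
      simp only [hs, Finset.mem_filter, Finset.mem_product, Finset.mem_univ, and_true,
        true_and] at hDx ⊢
      refine ⟨⟨hDx.1.1, hDx.1.2⟩, ?_⟩
      rw [flipS_single_apply, hDx.2]
      simp
    · rintro ⟨D, x⟩ _
      simp [flipS_flipS]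
    · rintro ⟨D, x⟩ _
      simp [flipS_flipS]
    · rintro ⟨D, x⟩ hDx
      simp only [hg, flipS_flipS]
      rw [flipS_comm]
      ring
  have hfilter : s.filter (fun Dx => Dx.2 k = false)
      = (Finset.univ.powersetCard m ×ˢ Finset.univ :
          Finset (Finset (Fin n) × ((Fin n → Bool)))).filter
        (fun Dx => k ∈ Dx.1 ∧ Dx.2 k = false) := by
    rw [hs, Finset.filter_filter]
  rw [UU, ← hfilter, ← hsplit, hswap]
  ring

/-- Four times the Sym2-sum equals `UU`. -/
lemma four_S (hm : 2 ≤ m) :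
    4 * ∑ p ∈ Finset.univ.filter
        (fun p : Sym2 ({j : Fin n // j ≠ k} → Bool) =>
          ¬ p.IsDiag ∧ pairWeight n k p = m), minorSq n A k p = UU k A m := by
  have h2 := two_mul_sym2 (minorSq n A k) (pairWeight n k) m
  have h3 := ordered_eq k A m hm
  rw [sum_E_eq]
  rw [h3] at h2
  linarith

/-- `UU` as an iterated sum over `D`. -/
lemma UU_eq_iterated :
    UU k A m = ∑ D ∈ Finset.univ.powersetCard m,
      (if k ∈ D then
        ∑ x : Fin n → Bool, (A x * A (flipS D x)
          - A (flipS {k} x) * A (flipS D (flipS {k} x))) ^ 2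
      else 0) := by
  classical
  rw [UU, Finset.sum_filter, Finset.sum_product]
  apply Finset.sum_congr rfl
  intro D _
  by_cases hk : k ∈ D <;> simp [hk]

end Fixed2

/-- Per-`D` inequality. -/
lemma perD (A : (Fin n → Bool) → ℝ) (D : Finset (Fin n)) {k₀ : Fin n} (hk₀ : k₀ ∈ D) :
    ∑ x : Fin n → Bool, (A x * A (flipS D x)
        - A (flipS {k₀} x) * A (flipS D (flipS {k₀} x))) ^ 2
      ≤ ∑ k ∈ D.erase k₀, ∑ x : Fin n → Bool, (A x * A (flipS D x)
        - A (flipS {k} x) * A (flipS D (flipS {k} x))) ^ 2 := by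
  set H : (Fin n → Bool) → ℝ := fun x => A x * A (flipS D x) with hH
  have hform : ∀ k : Fin n, ∀ x, (A x * A (flipS D x)
      - A (flipS {k} x) * A (flipS D (flipS {k} x))) ^ 2 = (H x - H (flipS {k} x)) ^ 2 := by
    intro k x; rfl
  have hpt : ∀ x, H (flipS {k₀} x) = H (flipS (D.erase k₀) x) := by
    intro x
    show A (flipS {k₀} x) * A (flipS D (flipS {k₀} x))
      = A (flipS (D.erase k₀) x) * A (flipS D (flipS (D.erase k₀) x))
    rw [flipS_erase hk₀, flipS_erase2 hk₀]
    ring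
  calc ∑ x : Fin n → Bool, (A x * A (flipS D x)
        - A (flipS {k₀} x) * A (flipS D (flipS {k₀} x))) ^ 2
      = ∑ x : Fin n → Bool, (H x - H (flipS (D.erase k₀) x)) ^ 2 := by
        apply Finset.sum_congr rfl
        intro x _
        rw [hform, hpt]
    _ ≤ ∑ k ∈ D.erase k₀, ∑ x : Fin n → Bool, (H x - H (flipS {k} x)) ^ 2 :=
        star (D.erase k₀) H
    _ = ∑ k ∈ D.erase k₀, ∑ x : Fin n → Bool, (A x * A (flipS D x)
        - A (flipS {k} x) * A (flipS D (flipS {k} x))) ^ 2 := by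
        apply Finset.sum_congr rfl
        intro kk _
        apply Finset.sum_congr rfl
        intro x _
        rw [hform]

/-- comparison of `UU` sums. -/
lemma UU_le (A : (Fin n → Bool) → ℝ) (m : ℕ) (k₀ : Fin n) :
    UU k₀ A m ≤ ∑ k ∈ Finset.univ.erase k₀, UU k A m := by
  classical
  have hW : ∀ (k : Fin n) (D : Finset (Fin n)),
      (0:ℝ) ≤ ∑ x : Fin n → Bool, (A x * A (flipS D x)
        - A (flipS {k} x) * A (flipS D (flipS {k} x))) ^ 2 :=
    fun k D => Finset.sum_nonneg fun _ _ => sq_nonneg _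
  rw [UU_eq_iterated]
  have hR : ∑ k ∈ Finset.univ.erase k₀, UU k A m
      = ∑ D ∈ Finset.univ.powersetCard m, ∑ k ∈ Finset.univ.erase k₀,
        (if k ∈ D then
          ∑ x : Fin n → Bool, (A x * A (flipS D x)
            - A (flipS {k} x) * A (flipS D (flipS {k} x))) ^ 2
        else 0) := by
    rw [Finset.sum_comm]
    apply Finset.sum_congr rfl
    intro k _
    exact UU_eq_iterated k A m
  rw [hR]
  apply Finset.sum_le_sum
  intro D _
  by_cases hk₀ : k₀ ∈ D
  · rw [if_pos hk₀]
    calc ∑ x : Fin n → Bool, (A x * A (flipS D x)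
          - A (flipS {k₀} x) * A (flipS D (flipS {k₀} x))) ^ 2
        ≤ ∑ k ∈ D.erase k₀, ∑ x : Fin n → Bool, (A x * A (flipS D x)
          - A (flipS {k} x) * A (flipS D (flipS {k} x))) ^ 2 := perD A D hk₀
      _ = ∑ k ∈ D.erase k₀, (if k ∈ D then
            ∑ x : Fin n → Bool, (A x * A (flipS D x)
              - A (flipS {k} x) * A (flipS D (flipS {k} x))) ^ 2 else 0) := by
          apply Finset.sum_congr rfl
          intro k hk
          rw [if_pos (Finset.mem_of_mem_erase hk)]
      _ ≤ ∑ k ∈ Finset.univ.erase k₀, (if k ∈ D then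
            ∑ x : Fin n → Bool, (A x * A (flipS D x)
              - A (flipS {k} x) * A (flipS D (flipS {k} x))) ^ 2 else 0) := by
          apply Finset.sum_le_sum_of_subset_of_nonneg
          · exact Finset.erase_subset_erase k₀ (Finset.subset_univ D)
          · intro k _ _
            by_cases hk : k ∈ D
            · rw [if_pos hk]; exact hW k D
            · rw [if_neg hk]
  · rw [if_neg hk₀]
    apply Finset.sum_nonneg
    intro k _
    by_cases hk : k ∈ D
    · rw [if_pos hk]; exact hW k D
    · rw [if_neg hk]

end SOSAux

/-- For each `2 ≤ m ≤ n`, the `m`-th piece of `d₂ + ⋯ + d_n - d₁` is non-negative. -/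
theorem sos_pieces_nonneg (n : ℕ) (hn : 2 ≤ n) (A : (Fin n → Bool) → ℝ)
    (m : ℕ) (hm : 2 ≤ m) (hmn : m ≤ n) :
    ∑ p ∈ Finset.univ.filter
        (fun p : Sym2 ({j : Fin n // j ≠ (⟨0, by omega⟩ : Fin n)} → Bool) =>
          ¬ p.IsDiag ∧ pairWeight n ⟨0, by omega⟩ p = m),
        minorSq n A ⟨0, by omega⟩ p ≤
      ∑ k ∈ Finset.univ.erase (⟨0, by omega⟩ : Fin n),
        ∑ p ∈ Finset.univ.filter
          (fun p : Sym2 ({j : Fin n // j ≠ k} → Bool) =>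
            ¬ p.IsDiag ∧ pairWeight n k p = m),
          minorSq n A k p := by
  set k₀ : Fin n := ⟨0, by omega⟩ with hk₀
  have h4 : ∀ k : Fin n, 4 * ∑ p ∈ Finset.univ.filter
      (fun p : Sym2 ({j : Fin n // j ≠ k} → Bool) =>
        ¬ p.IsDiag ∧ pairWeight n k p = m), minorSq n A k p = SOSAux.UU k A m :=
    fun k => SOSAux.four_S k A m hm
  have hle := SOSAux.UU_le A m k₀
  rw [← h4 k₀] at hle
  have hsum : ∑ k ∈ Finset.univ.erase k₀, SOSAux.UU k A m
      = 4 * ∑ k ∈ Finset.univ.erase k₀, ∑ p ∈ Finset.univ.filter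
        (fun p : Sym2 ({j : Fin n // j ≠ k} → Bool) =>
          ¬ p.IsDiag ∧ pairWeight n k p = m), minorSq n A k p := by
    rw [Finset.mul_sum]
    exact Finset.sum_congr rfl fun k _ => (h4 k).symm
  rw [hsum] at hle
  linarith
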